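/- Let k ≥ 1, let R = ℂ[x,y]/(x^k), let ȳ denote the image of y in R, and let S be the multiplicative submonoid of R generated by ȳ (the powers of ȳ). Let n ≥ 0 and let M be a finitely generated R-module such that the localization of M at S is a free module of rank n over the localization of R at S. Then there exists a submodule P of M such that P is a free R-module of rank n and the quotient M/P is a finite-dimensional ℂ-vector space. -/

import Mathlib

open MvPolynomial

/-- The ring `R = ℂ[x,y]/(x^k)`. -/
abbrev Rquot (k : ℕ) :=
  MvPolynomial (Fin 2) ℂ ⧸ Ideal.span {(X 0 : MvPolynomial (Fin 2) ℂ) ^ k}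

/-- The image `ȳ` of `y` in `R = ℂ[x,y]/(x^k)`. -/
noncomputable def ybar (k : ℕ) : Rquot k :=
  Ideal.Quotient.mk (Ideal.span {(X 0 : MvPolynomial (Fin 2) ℂ) ^ k}) (X 1)

/-- The multiplicative submonoid of `R` generated by `ȳ` (the powers of `ȳ`). -/
noncomputable def Spow (k : ℕ) : Submonoid (Rquot k) := Submonoid.powers (ybar k)

noncomputable def xbar (k : ℕ) : Rquot k :=
  Ideal.Quotient.mk (Ideal.span {(X 0 : MvPolynomial (Fin 2) ℂ) ^ k}) (X 0)

lemma prime_X0 : Prime (X 0 : MvPolynomial (Fin 2) ℂ) := by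
  rw [← MulEquiv.prime_iff (MvPolynomial.finSuccEquiv ℂ 1).toRingEquiv.toMulEquiv]
  have : (MvPolynomial.finSuccEquiv ℂ 1).toRingEquiv.toMulEquiv (X 0) = (Polynomial.X : Polynomial (MvPolynomial (Fin 1) ℂ)) := by
    simpa using MvPolynomial.finSuccEquiv_X_zero (R := ℂ) (n := 1)
  rw [this]
  exact Polynomial.prime_X

lemma X0_not_dvd_X1 : ¬ (X 0 : MvPolynomial (Fin 2) ℂ) ∣ X 1 := by
  rintro ⟨q, hq⟩
  have := congrArg (eval ![0, 1]) hq
  simp at this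

lemma ybar_mem_nonZeroDivisors (k : ℕ) : ybar k ∈ nonZeroDivisors (Rquot k) := by
  rw [mem_nonZeroDivisors_iff_right]
  intro r hr
  obtain ⟨p, rfl⟩ := Ideal.Quotient.mk_surjective r
  rw [ybar, ← map_mul, Ideal.Quotient.eq_zero_iff_mem, Ideal.mem_span_singleton] at hr
  rw [Ideal.Quotient.eq_zero_iff_mem, Ideal.mem_span_singleton]
  exact prime_X0.pow_dvd_of_dvd_mul_right k X0_not_dvd_X1 hr

lemma Spow_le_nzd (k : ℕ) : Spow k ≤ nonZeroDivisors (Rquot k) := by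
  rw [Spow, Submonoid.powers_le]
  exact ybar_mem_nonZeroDivisors k

lemma xbar_pow_k (k : ℕ) : (xbar k) ^ k = 0 := by
  rw [xbar, ← map_pow, Ideal.Quotient.eq_zero_iff_mem]
  exact Ideal.subset_span rfl


set_option maxHeartbeats 1000000 in
set_option synthInstance.maxHeartbeats 400000 in
/-- Let `k ≥ 1`, `R = ℂ[x,y]/(x^k)`, `S` the powers of `ȳ`, and let
`M` be a finitely generated `R`-module whose localization at `S` is free of rank `n`
over the localization of `R` at `S`.  Then there is a submodule `P ⊆ M` that is free
of rank `n` over `R` such that `M/P` is a finite-dimensional `ℂ`-vector space. -/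
theorem exists_maximal_free_submodule (k : ℕ) (hk : 1 ≤ k) (n : ℕ)
    (M : Type) [AddCommGroup M] [Module (Rquot k) M] [Module.Finite (Rquot k) M]
    [Module ℂ M] [IsScalarTower ℂ (Rquot k) M]
    (hfree : Nonempty (Module.Basis (Fin n) (Localization (Spow k)) (LocalizedModule (Spow k) M))) :
    ∃ P : Submodule (Rquot k) M,
      Nonempty (Module.Basis (Fin n) (Rquot k) P) ∧ FiniteDimensional ℂ (M ⧸ P) := by
  classical
  obtain ⟨b⟩ := hfree
  have halg : Function.Injective (algebraMap (Rquot k) (Localization (Spow k))) :=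
    IsLocalization.injective (Localization (Spow k)) (Spow_le_nzd k)
  set f := LocalizedModule.mkLinearMap (Spow k) M with hf
  have hrep : ∀ i : Fin n, ∃ m : M, ∃ s : Spow k, b i = LocalizedModule.mk m s :=
    fun i => LocalizedModule.induction_on (fun m s => ⟨m, s, rfl⟩) (b i)
  choose m s hms using hrep
  have hunit : ∀ i, IsUnit (algebraMap (Rquot k) (Localization (Spow k)) (s i)) :=
    fun i => IsLocalization.map_units (Localization (Spow k)) (s i)
  set c := b.isUnitSMul hunit with hcdef
  have hc : ∀ i, c i = f (m i) := by
    intro i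
    rw [hcdef, Module.Basis.isUnitSMul_apply, hms, algebraMap_smul,
      LocalizedModule.smul'_mk, ← Submonoid.smul_def, LocalizedModule.mk_cancel]
    rfl
  have hinj1 : Function.Injective fun r : Rquot k => r • (1 : Localization (Spow k)) := by
    have : (fun r : Rquot k => r • (1 : Localization (Spow k)))
        = ⇑(algebraMap (Rquot k) (Localization (Spow k))) :=
      funext fun r => (Algebra.algebraMap_eq_smul_one r).symm
    rw [this]; exact halg
  have hlic : LinearIndependent (Rquot k) (⇑c) := c.linearIndependent.restrict_scalars hinj1
  have hfc : f ∘ m = ⇑c := funext fun i => (hc i).symm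
  have hlim : LinearIndependent (Rquot k) m :=
    LinearIndependent.of_comp f (hfc ▸ hlic)
  set P := Submodule.span (Rquot k) (Set.range m) with hP
  refine ⟨P, ⟨Module.Basis.span hlim⟩, ?_⟩
  -- the localization of P is everything
  have hloc : P.localized' (Localization (Spow k)) (Spow k) f = ⊤ := by
    rw [hP, Submodule.localized'_span, ← Set.range_comp, hfc, c.span_eq]
  -- every element of M has a power of ybar moving it into P
  have htor : ∀ w : M, ∃ N : ℕ, (ybar k) ^ N • w ∈ P := by
    intro w
    have hw : f w ∈ P.localized' (Localization (Spow k)) (Spow k) f := by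
      rw [hloc]; trivial
    obtain ⟨p, hp, t, ht⟩ := (Submodule.mem_localized' _ _ _ _ _).1 hw
    rw [IsLocalizedModule.mk'_eq_iff] at ht
    have h0 : f ((t : Rquot k) • w - p) = 0 := by
      rw [map_sub, map_smul, ← Submonoid.smul_def, ← ht, sub_self]
    obtain ⟨u, hu⟩ := (IsLocalizedModule.eq_zero_iff (Spow k) f).1 h0
    obtain ⟨N, hN⟩ := (u * t).2
    refine ⟨N, ?_⟩
    have h1 : ((u : Rquot k) * (t : Rquot k)) • w = (u : Rquot k) • p := by
      have h2 := hu
      rw [Submonoid.smul_def, smul_sub, sub_eq_zero, smul_smul] at h2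
      exact h2
    have h3 : (ybar k) ^ N • w = (u : Rquot k) • p := by
      have hN' : ybar k ^ N = ((u * t : Spow k) : Rquot k) := hN
      rw [hN', Submonoid.coe_mul, h1]
    rw [h3]
    exact P.smul_mem _ hp
  have htorq : ∀ z : M ⧸ P, ∃ N : ℕ, (ybar k) ^ N • z = 0 := by
    intro z
    obtain ⟨w, rfl⟩ := Submodule.Quotient.mk_surjective P z
    obtain ⟨N, hN⟩ := htor w
    refine ⟨N, ?_⟩
    have e : (ybar k) ^ N • (Submodule.Quotient.mk w : M ⧸ P)
        = Submodule.Quotient.mk ((ybar k) ^ N • w) := (Submodule.Quotient.mk_smul P _ _).symm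
    rw [e, Submodule.Quotient.mk_eq_zero]
    exact hN
  choose Nf hNf using htorq
  have hfinQ : Module.Finite (Rquot k) (M ⧸ P) := Module.Finite.quotient (Rquot k) P
  obtain ⟨T0, hT0⟩ := hfinQ.fg_top
  set N := (T0.sup Nf) + 1 with hNdef
  have hbig : ∀ z ∈ T0, ∀ b', N ≤ b' → (ybar k) ^ b' • z = 0 := by
    intro z hz b' hb'
    have hle : Nf z ≤ b' :=
      le_trans (le_trans (Finset.le_sup hz) (Nat.le_succ _)) hb'
    calc ybar k ^ b' • z
        = (ybar k ^ (b' - Nf z) * ybar k ^ Nf z) • z := by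
          rw [← pow_add, Nat.sub_add_cancel hle]
      _ = ybar k ^ (b' - Nf z) • (ybar k ^ Nf z • z) := mul_smul (ybar k ^ (b' - Nf z)) (ybar k ^ Nf z) z
      _ = ybar k ^ (b' - Nf z) • (0 : M ⧸ P) := congrArg _ (hNf z)
      _ = 0 := smul_zero (ybar k ^ (b' - Nf z))
  have hxbig : ∀ a, k ≤ a → (xbar k) ^ a = 0 := fun a ha => by
    rw [← Nat.sub_add_cancel ha, pow_add, xbar_pow_k, mul_zero]
  set T : Set (M ⧸ P) :=
    (fun q : (ℕ × ℕ) × (M ⧸ P) => ((xbar k) ^ q.1.1 * (ybar k) ^ q.1.2) • q.2) ''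
      ((Set.Iio k ×ˢ Set.Iio N) ×ˢ (T0 : Set (M ⧸ P))) with hT
  have hTfin : T.Finite :=
    (((Set.finite_Iio k).prod (Set.finite_Iio N)).prod T0.finite_toSet).image _
  set W := Submodule.span ℂ T with hWdef
  have hkey : ∀ (a b' : ℕ) (z : M ⧸ P), z ∈ T0 →
      ((xbar k) ^ a * (ybar k) ^ b') • z ∈ W := by
    intro a b' z hz
    by_cases ha : a < k
    · by_cases hb : b' < N
      · exact Submodule.subset_span ⟨((a, b'), z), ⟨⟨ha, hb⟩, hz⟩, rfl⟩
      · have e : (xbar k ^ a * ybar k ^ b') • z = xbar k ^ a • (ybar k ^ b' • z) :=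
          mul_smul (xbar k ^ a) (ybar k ^ b') z
        have e2 : (xbar k ^ a : Rquot k) • (0 : M ⧸ P) = 0 := smul_zero (xbar k ^ a)
        rw [e, hbig z hz b' (le_of_not_gt hb), e2]
        exact W.zero_mem
    · have e : (xbar k ^ a * ybar k ^ b') • z = (0 : Rquot k) • z := by
        rw [hxbig a (le_of_not_gt ha), zero_mul]
      have e2 : (0 : Rquot k) • z = 0 := zero_smul (Rquot k) z
      rw [e, e2]
      exact W.zero_mem
  have hXW : ∀ i : Fin 2, ∀ w ∈ W,
      (Ideal.Quotient.mk (Ideal.span {(X 0 : MvPolynomial (Fin 2) ℂ) ^ k}) (X i) : Rquot k)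
        • w ∈ W := by
    intro i w hw
    induction hw using Submodule.span_induction with
    | mem x hx =>
      obtain ⟨⟨⟨a, b'⟩, z⟩, ⟨⟨ha, hb⟩, hz⟩, rfl⟩ := hx
      fin_cases i
      · show xbar k • ((xbar k ^ a * ybar k ^ b') • z) ∈ W
        have e : (xbar k ^ (a + 1) * ybar k ^ b') • z
            = xbar k • ((xbar k ^ a * ybar k ^ b') • z) := by
          rw [pow_succ', mul_assoc]; exact mul_smul (xbar k) (xbar k ^ a * ybar k ^ b') z
        rw [← e]
        exact hkey (a + 1) b' z hz
      · show ybar k • ((xbar k ^ a * ybar k ^ b') • z) ∈ W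
        have e : (xbar k ^ a * ybar k ^ (b' + 1)) • z
            = ybar k • ((xbar k ^ a * ybar k ^ b') • z) := by
          rw [pow_succ', mul_left_comm]; exact mul_smul (ybar k) (xbar k ^ a * ybar k ^ b') z
        rw [← e]
        exact hkey a (b' + 1) z hz
    | zero =>
      have e : (Ideal.Quotient.mk (Ideal.span {(X 0 : MvPolynomial (Fin 2) ℂ) ^ k}) (X i)
          : Rquot k) • (0 : M ⧸ P) = 0 := smul_zero _
      rw [e]; exact W.zero_mem
    | add x y _ _ hx hy =>
      have e : (Ideal.Quotient.mk (Ideal.span {(X 0 : MvPolynomial (Fin 2) ℂ) ^ k}) (X i)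
          : Rquot k) • (x + y)
          = (Ideal.Quotient.mk (Ideal.span {(X 0 : MvPolynomial (Fin 2) ℂ) ^ k}) (X i)
          : Rquot k) • x
          + (Ideal.Quotient.mk (Ideal.span {(X 0 : MvPolynomial (Fin 2) ℂ) ^ k}) (X i)
          : Rquot k) • y := smul_add _ _ _
      rw [e]; exact W.add_mem hx hy
    | smul r x _ hx =>
      have e : (Ideal.Quotient.mk (Ideal.span {(X 0 : MvPolynomial (Fin 2) ℂ) ^ k}) (X i)
          : Rquot k) • (r • x)
          = r • ((Ideal.Quotient.mk (Ideal.span {(X 0 : MvPolynomial (Fin 2) ℂ) ^ k}) (X i)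
          : Rquot k) • x) := smul_comm _ _ _
      rw [e]; exact W.smul_mem r hx
  have halgsmul : ∀ (p : MvPolynomial (Fin 2) ℂ), ∀ w ∈ W,
      (Ideal.Quotient.mk (Ideal.span {(X 0 : MvPolynomial (Fin 2) ℂ) ^ k}) p : Rquot k)
        • w ∈ W := by
    intro p
    induction p using MvPolynomial.induction_on with
    | C z =>
      intro w hw
      have hCz : (Ideal.Quotient.mk (Ideal.span {(X 0 : MvPolynomial (Fin 2) ℂ) ^ k}) (C z)
          : Rquot k) = algebraMap ℂ (Rquot k) z := by
        rw [← MvPolynomial.algebraMap_eq, Ideal.Quotient.mk_algebraMap]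
      have e : algebraMap ℂ (Rquot k) z • w = z • w := algebraMap_smul (Rquot k) z w
      rw [hCz, e]
      exact W.smul_mem z hw
    | add p q hp hq =>
      intro w hw
      have e : ((Ideal.Quotient.mk (Ideal.span {(X 0 : MvPolynomial (Fin 2) ℂ) ^ k}) p
          : Rquot k) + Ideal.Quotient.mk (Ideal.span {(X 0 : MvPolynomial (Fin 2) ℂ) ^ k}) q) • w
          = (Ideal.Quotient.mk (Ideal.span {(X 0 : MvPolynomial (Fin 2) ℂ) ^ k}) p
          : Rquot k) • w
          + (Ideal.Quotient.mk (Ideal.span {(X 0 : MvPolynomial (Fin 2) ℂ) ^ k}) q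
          : Rquot k) • w := add_smul _ _ _
      rw [map_add, e]
      exact W.add_mem (hp w hw) (hq w hw)
    | mul_X p i hp =>
      intro w hw
      have e : ((Ideal.Quotient.mk (Ideal.span {(X 0 : MvPolynomial (Fin 2) ℂ) ^ k}) p
          : Rquot k) * Ideal.Quotient.mk (Ideal.span {(X 0 : MvPolynomial (Fin 2) ℂ) ^ k}) (X i)) • w
          = (Ideal.Quotient.mk (Ideal.span {(X 0 : MvPolynomial (Fin 2) ℂ) ^ k}) p
          : Rquot k) • ((Ideal.Quotient.mk (Ideal.span {(X 0 : MvPolynomial (Fin 2) ℂ) ^ k}) (X i)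
          : Rquot k) • w) := mul_smul (Ideal.Quotient.mk (Ideal.span {(X 0 : MvPolynomial (Fin 2) ℂ) ^ k}) p : Rquot k)
            (Ideal.Quotient.mk (Ideal.span {(X 0 : MvPolynomial (Fin 2) ℂ) ^ k}) (X i) : Rquot k) w
      rw [map_mul, e]
      exact hp _ (hXW i w hw)
  have htop : ∀ z : M ⧸ P, z ∈ W := by
    intro z
    have hz : z ∈ Submodule.span (Rquot k) (T0 : Set (M ⧸ P)) := by
      rw [hT0]; trivial
    induction hz using Submodule.span_induction with
    | mem x hx =>
      have e : (xbar k ^ 0 * ybar k ^ 0) • x = x := by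
        rw [pow_zero, pow_zero, one_mul]; exact one_smul (Rquot k) x
      have h := hkey 0 0 x hx
      rw [e] at h
      exact h
    | zero => exact W.zero_mem
    | add x y _ _ hx hy => exact W.add_mem hx hy
    | smul r x _ hx =>
      obtain ⟨p, rfl⟩ := Ideal.Quotient.mk_surjective r
      exact halgsmul p x hx
  have hfin : Module.Finite ℂ (M ⧸ P) := by
    refine ⟨⟨hTfin.toFinset, ?_⟩⟩
    rw [Set.Finite.coe_toFinset]
    exact eq_top_iff.2 fun z _ => htop z
  exact hfin
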